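/- Let k_1, k_2, k_3 ∈ ℕ and set a_1 = 3k_1 + 1, a_2 = 3k_2 + 2, a_3 = 3k_3 + 2, with gcd(a_1, a_2, a_3) = 1. Then the quotient ⟨a_1, a_2, a_3⟩/3 equals the numerical semigroup generated by a_1, a_2, a_3, (a_1 + a_2)/3, (a_1 + a_3)/3, (2a_2 + a_3)/3, and (a_2 + 2a_3)/3. -/

import Mathlib

lemma mem3_iff {a b c n : ℕ} :
    n ∈ AddSubmonoid.closure ({a, b, c} : Set ℕ) ↔ ∃ x y z, n = x * a + y * b + z * c := by
  constructor
  · intro h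
    induction h using AddSubmonoid.closure_induction with
    | mem g hg =>
      rcases hg with rfl | rfl | rfl
      · exact ⟨1, 0, 0, by ring⟩
      · exact ⟨0, 1, 0, by ring⟩
      · exact ⟨0, 0, 1, by ring⟩
    | zero => exact ⟨0, 0, 0, by ring⟩
    | add p q _ _ hp hq =>
      obtain ⟨x, y, z, rfl⟩ := hp
      obtain ⟨x', y', z', rfl⟩ := hq
      exact ⟨x + x', y + y', z + z', by ring⟩
  · rintro ⟨x, y, z, rfl⟩
    have ha : a ∈ AddSubmonoid.closure ({a, b, c} : Set ℕ) :=
      AddSubmonoid.subset_closure (by simp)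
    have hb : b ∈ AddSubmonoid.closure ({a, b, c} : Set ℕ) :=
      AddSubmonoid.subset_closure (by simp)
    have hc : c ∈ AddSubmonoid.closure ({a, b, c} : Set ℕ) :=
      AddSubmonoid.subset_closure (by simp)
    exact add_mem (add_mem (nsmul_mem ha x) (nsmul_mem hb y)) (nsmul_mem hc z)

theorem quotient_3k1_3k2_3k3
    (k₁ k₂ k₃ : ℕ) (a₁ a₂ a₃ : ℕ)
    (ha₁ : a₁ = 3 * k₁ + 1) (ha₂ : a₂ = 3 * k₂ + 2) (ha₃ : a₃ = 3 * k₃ + 2)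
    (hgcd : Nat.gcd a₁ (Nat.gcd a₂ a₃) = 1) :
    {m : ℕ | 3 * m ∈ AddSubmonoid.closure ({a₁, a₂, a₃} : Set ℕ)} =
      ↑(AddSubmonoid.closure
        ({a₁, a₂, a₃, (a₁ + a₂) / 3, (a₁ + a₃) / 3,
          (2 * a₂ + a₃) / 3, (a₂ + 2 * a₃) / 3} : Set ℕ)) := by
  subst ha₁ ha₂ ha₃
  have hb₁ : (3 * k₁ + 1 + (3 * k₂ + 2)) / 3 = k₁ + k₂ + 1 := by omega
  have hb₂ : (3 * k₁ + 1 + (3 * k₃ + 2)) / 3 = k₁ + k₃ + 1 := by omega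
  have hb₃ : (2 * (3 * k₂ + 2) + (3 * k₃ + 2)) / 3 = 2 * k₂ + k₃ + 2 := by omega
  have hb₄ : (3 * k₂ + 2 + 2 * (3 * k₃ + 2)) / 3 = k₂ + 2 * k₃ + 2 := by omega
  set S : Set ℕ := ({3 * k₁ + 1, 3 * k₂ + 2, 3 * k₃ + 2,
      (3 * k₁ + 1 + (3 * k₂ + 2)) / 3, (3 * k₁ + 1 + (3 * k₃ + 2)) / 3,
      (2 * (3 * k₂ + 2) + (3 * k₃ + 2)) / 3,
      (3 * k₂ + 2 + 2 * (3 * k₃ + 2)) / 3} : Set ℕ) with hS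
  have g₁ : 3 * k₁ + 1 ∈ AddSubmonoid.closure S := AddSubmonoid.subset_closure (by simp [hS])
  have g₂ : 3 * k₂ + 2 ∈ AddSubmonoid.closure S := AddSubmonoid.subset_closure (by simp [hS])
  have g₃ : 3 * k₃ + 2 ∈ AddSubmonoid.closure S := AddSubmonoid.subset_closure (by simp [hS])
  have g₄ : (3 * k₁ + 1 + (3 * k₂ + 2)) / 3 ∈ AddSubmonoid.closure S :=
    AddSubmonoid.subset_closure (by simp [hS])
  have g₅ : (3 * k₁ + 1 + (3 * k₃ + 2)) / 3 ∈ AddSubmonoid.closure S :=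
    AddSubmonoid.subset_closure (by simp [hS])
  have g₆ : (2 * (3 * k₂ + 2) + (3 * k₃ + 2)) / 3 ∈ AddSubmonoid.closure S :=
    AddSubmonoid.subset_closure (by simp [hS])
  have g₇ : (3 * k₂ + 2 + 2 * (3 * k₃ + 2)) / 3 ∈ AddSubmonoid.closure S :=
    AddSubmonoid.subset_closure (by simp [hS])
  have key : ∀ c₁ c₂ c₃ c₄ c₅ c₆ c₇ : ℕ,
      c₁ * (3*k₁+1) + c₂ * (3*k₂+2) + c₃ * (3*k₃+2) + c₄ * (k₁+k₂+1) + c₅ * (k₁+k₃+1)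
        + c₆ * (2*k₂+k₃+2) + c₇ * (k₂+2*k₃+2) ∈ AddSubmonoid.closure S := by
    intro c₁ c₂ c₃ c₄ c₅ c₆ c₇
    rw [← hb₁, ← hb₂, ← hb₃, ← hb₄]
    exact add_mem (add_mem (add_mem (add_mem (add_mem (add_mem
      (nsmul_mem g₁ c₁) (nsmul_mem g₂ c₂)) (nsmul_mem g₃ c₃)) (nsmul_mem g₄ c₄))
      (nsmul_mem g₅ c₅)) (nsmul_mem g₆ c₆)) (nsmul_mem g₇ c₇)
  ext m
  simp only [Set.mem_setOf_eq, SetLike.mem_coe]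
  constructor
  · intro hm
    obtain ⟨x, y, z, hxyz⟩ := mem3_iff.mp hm
    have hlin : 3 * m = 3 * (x * k₁ + y * k₂ + z * k₃) + x + 2 * y + 2 * z := by
      rw [hxyz]; ring
    have hy : y % 3 = 0 ∨ y % 3 = 1 ∨ y % 3 = 2 := by omega
    have hz : z % 3 = 0 ∨ z % 3 = 1 ∨ z % 3 = 2 := by omega
    rcases hy with hy | hy | hy <;> rcases hz with hz | hz | hz
    · obtain ⟨x', rfl⟩ : ∃ x', x = 3 * x' + 0 := ⟨x / 3, by omega⟩
      obtain ⟨y', rfl⟩ : ∃ y', y = 3 * y' + 0 := ⟨y / 3, by omega⟩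
      obtain ⟨z', rfl⟩ : ∃ z', z = 3 * z' + 0 := ⟨z / 3, by omega⟩
      have h3 : 3 * m = 3 * (x' * (3*k₁+1) + y' * (3*k₂+2) + z' * (3*k₃+2) + 0 * (k₁+k₂+1) + 0 * (k₁+k₃+1) + 0 * (2*k₂+k₃+2) + 0 * (k₂+2*k₃+2)) := by rw [hxyz]; ring
      have hm' : m = x' * (3*k₁+1) + y' * (3*k₂+2) + z' * (3*k₃+2) + 0 * (k₁+k₂+1) + 0 * (k₁+k₃+1) + 0 * (2*k₂+k₃+2) + 0 * (k₂+2*k₃+2) := by omega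
      rw [hm']; exact key _ _ _ _ _ _ _
    · obtain ⟨x', rfl⟩ : ∃ x', x = 3 * x' + 1 := ⟨x / 3, by omega⟩
      obtain ⟨y', rfl⟩ : ∃ y', y = 3 * y' + 0 := ⟨y / 3, by omega⟩
      obtain ⟨z', rfl⟩ : ∃ z', z = 3 * z' + 1 := ⟨z / 3, by omega⟩
      have h3 : 3 * m = 3 * (x' * (3*k₁+1) + y' * (3*k₂+2) + z' * (3*k₃+2) + 0 * (k₁+k₂+1) + 1 * (k₁+k₃+1) + 0 * (2*k₂+k₃+2) + 0 * (k₂+2*k₃+2)) := by rw [hxyz]; ring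
      have hm' : m = x' * (3*k₁+1) + y' * (3*k₂+2) + z' * (3*k₃+2) + 0 * (k₁+k₂+1) + 1 * (k₁+k₃+1) + 0 * (2*k₂+k₃+2) + 0 * (k₂+2*k₃+2) := by omega
      rw [hm']; exact key _ _ _ _ _ _ _
    · obtain ⟨x', rfl⟩ : ∃ x', x = 3 * x' + 2 := ⟨x / 3, by omega⟩
      obtain ⟨y', rfl⟩ : ∃ y', y = 3 * y' + 0 := ⟨y / 3, by omega⟩
      obtain ⟨z', rfl⟩ : ∃ z', z = 3 * z' + 2 := ⟨z / 3, by omega⟩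
      have h3 : 3 * m = 3 * (x' * (3*k₁+1) + y' * (3*k₂+2) + z' * (3*k₃+2) + 0 * (k₁+k₂+1) + 2 * (k₁+k₃+1) + 0 * (2*k₂+k₃+2) + 0 * (k₂+2*k₃+2)) := by rw [hxyz]; ring
      have hm' : m = x' * (3*k₁+1) + y' * (3*k₂+2) + z' * (3*k₃+2) + 0 * (k₁+k₂+1) + 2 * (k₁+k₃+1) + 0 * (2*k₂+k₃+2) + 0 * (k₂+2*k₃+2) := by omega
      rw [hm']; exact key _ _ _ _ _ _ _
    · obtain ⟨x', rfl⟩ : ∃ x', x = 3 * x' + 1 := ⟨x / 3, by omega⟩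
      obtain ⟨y', rfl⟩ : ∃ y', y = 3 * y' + 1 := ⟨y / 3, by omega⟩
      obtain ⟨z', rfl⟩ : ∃ z', z = 3 * z' + 0 := ⟨z / 3, by omega⟩
      have h3 : 3 * m = 3 * (x' * (3*k₁+1) + y' * (3*k₂+2) + z' * (3*k₃+2) + 1 * (k₁+k₂+1) + 0 * (k₁+k₃+1) + 0 * (2*k₂+k₃+2) + 0 * (k₂+2*k₃+2)) := by rw [hxyz]; ring
      have hm' : m = x' * (3*k₁+1) + y' * (3*k₂+2) + z' * (3*k₃+2) + 1 * (k₁+k₂+1) + 0 * (k₁+k₃+1) + 0 * (2*k₂+k₃+2) + 0 * (k₂+2*k₃+2) := by omega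
      rw [hm']; exact key _ _ _ _ _ _ _
    · obtain ⟨x', rfl⟩ : ∃ x', x = 3 * x' + 2 := ⟨x / 3, by omega⟩
      obtain ⟨y', rfl⟩ : ∃ y', y = 3 * y' + 1 := ⟨y / 3, by omega⟩
      obtain ⟨z', rfl⟩ : ∃ z', z = 3 * z' + 1 := ⟨z / 3, by omega⟩
      have h3 : 3 * m = 3 * (x' * (3*k₁+1) + y' * (3*k₂+2) + z' * (3*k₃+2) + 1 * (k₁+k₂+1) + 1 * (k₁+k₃+1) + 0 * (2*k₂+k₃+2) + 0 * (k₂+2*k₃+2)) := by rw [hxyz]; ring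
      have hm' : m = x' * (3*k₁+1) + y' * (3*k₂+2) + z' * (3*k₃+2) + 1 * (k₁+k₂+1) + 1 * (k₁+k₃+1) + 0 * (2*k₂+k₃+2) + 0 * (k₂+2*k₃+2) := by omega
      rw [hm']; exact key _ _ _ _ _ _ _
    · obtain ⟨x', rfl⟩ : ∃ x', x = 3 * x' + 0 := ⟨x / 3, by omega⟩
      obtain ⟨y', rfl⟩ : ∃ y', y = 3 * y' + 1 := ⟨y / 3, by omega⟩
      obtain ⟨z', rfl⟩ : ∃ z', z = 3 * z' + 2 := ⟨z / 3, by omega⟩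
      have h3 : 3 * m = 3 * (x' * (3*k₁+1) + y' * (3*k₂+2) + z' * (3*k₃+2) + 0 * (k₁+k₂+1) + 0 * (k₁+k₃+1) + 0 * (2*k₂+k₃+2) + 1 * (k₂+2*k₃+2)) := by rw [hxyz]; ring
      have hm' : m = x' * (3*k₁+1) + y' * (3*k₂+2) + z' * (3*k₃+2) + 0 * (k₁+k₂+1) + 0 * (k₁+k₃+1) + 0 * (2*k₂+k₃+2) + 1 * (k₂+2*k₃+2) := by omega
      rw [hm']; exact key _ _ _ _ _ _ _
    · obtain ⟨x', rfl⟩ : ∃ x', x = 3 * x' + 2 := ⟨x / 3, by omega⟩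
      obtain ⟨y', rfl⟩ : ∃ y', y = 3 * y' + 2 := ⟨y / 3, by omega⟩
      obtain ⟨z', rfl⟩ : ∃ z', z = 3 * z' + 0 := ⟨z / 3, by omega⟩
      have h3 : 3 * m = 3 * (x' * (3*k₁+1) + y' * (3*k₂+2) + z' * (3*k₃+2) + 2 * (k₁+k₂+1) + 0 * (k₁+k₃+1) + 0 * (2*k₂+k₃+2) + 0 * (k₂+2*k₃+2)) := by rw [hxyz]; ring
      have hm' : m = x' * (3*k₁+1) + y' * (3*k₂+2) + z' * (3*k₃+2) + 2 * (k₁+k₂+1) + 0 * (k₁+k₃+1) + 0 * (2*k₂+k₃+2) + 0 * (k₂+2*k₃+2) := by omega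
      rw [hm']; exact key _ _ _ _ _ _ _
    · obtain ⟨x', rfl⟩ : ∃ x', x = 3 * x' + 0 := ⟨x / 3, by omega⟩
      obtain ⟨y', rfl⟩ : ∃ y', y = 3 * y' + 2 := ⟨y / 3, by omega⟩
      obtain ⟨z', rfl⟩ : ∃ z', z = 3 * z' + 1 := ⟨z / 3, by omega⟩
      have h3 : 3 * m = 3 * (x' * (3*k₁+1) + y' * (3*k₂+2) + z' * (3*k₃+2) + 0 * (k₁+k₂+1) + 0 * (k₁+k₃+1) + 1 * (2*k₂+k₃+2) + 0 * (k₂+2*k₃+2)) := by rw [hxyz]; ring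
      have hm' : m = x' * (3*k₁+1) + y' * (3*k₂+2) + z' * (3*k₃+2) + 0 * (k₁+k₂+1) + 0 * (k₁+k₃+1) + 1 * (2*k₂+k₃+2) + 0 * (k₂+2*k₃+2) := by omega
      rw [hm']; exact key _ _ _ _ _ _ _
    · obtain ⟨x', rfl⟩ : ∃ x', x = 3 * x' + 1 := ⟨x / 3, by omega⟩
      obtain ⟨y', rfl⟩ : ∃ y', y = 3 * y' + 2 := ⟨y / 3, by omega⟩
      obtain ⟨z', rfl⟩ : ∃ z', z = 3 * z' + 2 := ⟨z / 3, by omega⟩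
      have h3 : 3 * m = 3 * (x' * (3*k₁+1) + y' * (3*k₂+2) + z' * (3*k₃+2) + 1 * (k₁+k₂+1) + 0 * (k₁+k₃+1) + 0 * (2*k₂+k₃+2) + 1 * (k₂+2*k₃+2)) := by rw [hxyz]; ring
      have hm' : m = x' * (3*k₁+1) + y' * (3*k₂+2) + z' * (3*k₃+2) + 1 * (k₁+k₂+1) + 0 * (k₁+k₃+1) + 0 * (2*k₂+k₃+2) + 1 * (k₂+2*k₃+2) := by omega
      rw [hm']; exact key _ _ _ _ _ _ _
  · intro hm
    induction hm using AddSubmonoid.closure_induction with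
    | mem g hg =>
      apply mem3_iff.mpr
      rw [hS] at hg
      rcases hg with rfl | rfl | rfl | rfl | rfl | rfl | rfl
      · exact ⟨3, 0, 0, by ring⟩
      · exact ⟨0, 3, 0, by ring⟩
      · exact ⟨0, 0, 3, by ring⟩
      · exact ⟨1, 1, 0, by omega⟩
      · exact ⟨1, 0, 1, by omega⟩
      · exact ⟨0, 2, 1, by omega⟩
      · exact ⟨0, 1, 2, by omega⟩
    | zero => simpa using zero_mem _
    | add p q _ _ hp hq =>
      rw [mul_add]
      exact add_mem hp hq
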